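/- For every natural number n, the inverse of the symmetric Pascal matrix satisfies Q_n⁻¹ = D_n · (P_nᵀ · P_n) · D_n, where D_n is the diagonal matrix with entries (D_n)_{ii} = (−1)^i; in particular Q_n⁻¹ is similar to Q_n. -/

import Mathlib

open Matrix Finset

/-- The lower triangular Pascal matrix of size `n+1` over `ℤ`. -/
def pascalL (n : ℕ) : Matrix (Fin (n+1)) (Fin (n+1)) ℤ :=
  Matrix.of fun i j => (Nat.choose i.val j.val : ℤ)

/-- The symmetric Pascal matrix `Q_n = P_n * P_nᵀ`. -/
def pascalQ (n : ℕ) : Matrix (Fin (n+1)) (Fin (n+1)) ℤ :=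
  pascalL n * (pascalL n)ᵀ

/-- The diagonal sign matrix with entries `(-1)^i`. -/
def pascalD (n : ℕ) : Matrix (Fin (n+1)) (Fin (n+1)) ℤ :=
  Matrix.diagonal fun i => (-1 : ℤ) ^ i.val

lemma key_sum (i j : ℕ) :
    ∑ k ∈ Finset.range (i+1), ((-1:ℤ))^(k+j) * (i.choose k) * (k.choose j)
      = if i = j then 1 else 0 := by
  rcases lt_or_ge i j with h | h
  · rw [if_neg h.ne]
    apply Finset.sum_eq_zero
    intro k hk
    have hk' : k < j := lt_of_lt_of_le (Finset.mem_range.mp hk) h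
    simp [Nat.choose_eq_zero_of_lt hk']
  · have hsub : Finset.Ico j (i+1) ⊆ Finset.range (i+1) := by
      intro k hk; simp only [Finset.mem_Ico, Finset.mem_range] at *; omega
    rw [← Finset.sum_subset hsub (by
      intro k hk hk2
      simp only [Finset.mem_range, Finset.mem_Ico, not_and, not_lt] at hk hk2
      have : k < j := by omega
      simp [Nat.choose_eq_zero_of_lt this])]
    rw [Finset.sum_Ico_eq_sum_range]
    have hlen : i + 1 - j = (i - j) + 1 := by omega
    rw [hlen]
    have : ∀ m ∈ Finset.range (i - j + 1),
        ((-1:ℤ))^(j + m + j) * (i.choose (j+m)) * ((j+m).choose j)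
          = (i.choose j : ℤ) * ((-1:ℤ)^m * ((i-j).choose m)) := by
      intro m hm
      have hm' : j + m ≤ i := by simp only [Finset.mem_range] at hm; omega
      have hc := Nat.choose_mul (n := i) (k := j + m) (s := j) (Nat.le_add_right j m)
      have hc' : (i.choose (j+m) : ℤ) * ((j+m).choose j) = (i.choose j : ℤ) * ((i-j).choose m) := by
        rw_mod_cast [hc]; simp
      have hpow : ((-1:ℤ))^(j + m + j) = (-1:ℤ)^m := by
        have : j + m + j = m + 2 * j := by omega
        rw [this, pow_add, pow_mul]; simp
      rw [hpow, mul_assoc, hc']; ring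
    rw [Finset.sum_congr rfl this, ← Finset.mul_sum, Int.alternating_sum_range_choose]
    rcases eq_or_ne i j with rfl | hne
    · simp
    · have : i - j ≠ 0 := by omega
      simp [this, hne]

lemma hDD (n : ℕ) : pascalD n * pascalD n = 1 := by
  simp [pascalD, Matrix.diagonal_mul_diagonal, ← pow_add, ← two_mul, pow_mul]

lemma hDT (n : ℕ) : (pascalD n)ᵀ = pascalD n := by
  simp [pascalD, Matrix.diagonal_transpose]

lemma h1 (n : ℕ) : pascalL n * (pascalD n * pascalL n * pascalD n) = 1 := by
  ext i j
  have hDPD : ∀ (k j' : Fin (n+1)), (pascalD n * pascalL n * pascalD n) k j'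
      = (-1:ℤ)^k.val * (k.val.choose j'.val) * (-1:ℤ)^j'.val := by
    intro k j'
    simp [pascalD, pascalL, Matrix.mul_diagonal, Matrix.diagonal_mul]
  rw [Matrix.mul_apply]
  simp only [hDPD]
  simp only [pascalL, Matrix.of_apply, Matrix.one_apply]
  have : ∀ k : Fin (n+1), ((i.val.choose k.val : ℤ)) * ((-1:ℤ)^k.val * (k.val.choose j.val) * (-1:ℤ)^j.val)
      = (-1:ℤ)^(k.val + j.val) * (i.val.choose k.val) * (k.val.choose j.val) := by
    intro k; rw [pow_add]; ring
  rw [Finset.sum_congr rfl (fun k _ => this k)]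
  rw [Fin.sum_univ_eq_sum_range (fun k => (-1:ℤ)^(k + j.val) * (i.val.choose k) * (k.choose j.val))]
  have hsub : Finset.range (i.val+1) ⊆ Finset.range (n+1) := by
    intro k hk; simp only [Finset.mem_range] at *; omega
  rw [← Finset.sum_subset hsub (by
    intro k hk hk2
    simp only [Finset.mem_range, not_lt] at hk hk2
    have : i.val < k := by omega
    simp [Nat.choose_eq_zero_of_lt this])]
  rw [key_sum]
  simp [Fin.ext_iff]

theorem pascalQ_inv (n : ℕ) :
    (pascalQ n)⁻¹ = pascalD n * ((pascalL n)ᵀ * pascalL n) * pascalD n ∧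
    ∃ S : Matrix (Fin (n+1)) (Fin (n+1)) ℤ,
      IsUnit S.det ∧ (pascalQ n)⁻¹ = S * pascalQ n * S⁻¹ := by
  have hD := hDD n
  have h2 : (pascalD n * pascalL n * pascalD n) * pascalL n = 1 :=
    mul_eq_one_comm.mp (h1 n)
  have hPDP' : pascalL n * (pascalD n * pascalL n) = pascalD n := by
    calc pascalL n * (pascalD n * pascalL n)
        = (pascalD n * pascalD n) * (pascalL n * (pascalD n * pascalL n)) := by
          rw [hD, Matrix.one_mul]
      _ = pascalD n * ((pascalD n * pascalL n * pascalD n) * pascalL n) := by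
          simp only [Matrix.mul_assoc]
      _ = pascalD n := by rw [h2, Matrix.mul_one]
  have hPT' : (pascalL n)ᵀ * (pascalD n * (pascalL n)ᵀ) = pascalD n := by
    have h4 := congrArg Matrix.transpose hPDP'
    simp only [Matrix.transpose_mul, hDT, Matrix.mul_assoc] at h4
    simpa only [Matrix.mul_assoc] using h4
  have hQmul : pascalQ n * (pascalD n * ((pascalL n)ᵀ * pascalL n) * pascalD n) = 1 := by
    calc pascalQ n * (pascalD n * ((pascalL n)ᵀ * pascalL n) * pascalD n)
        = pascalL n * (((pascalL n)ᵀ * (pascalD n * (pascalL n)ᵀ)) * (pascalL n * pascalD n)) := by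
          simp only [pascalQ, Matrix.mul_assoc]
      _ = pascalL n * (pascalD n * (pascalL n * pascalD n)) := by rw [hPT']
      _ = (pascalL n * (pascalD n * pascalL n)) * pascalD n := by
          simp only [Matrix.mul_assoc]
      _ = pascalD n * pascalD n := by rw [hPDP']
      _ = 1 := hD
  have hQinv : (pascalQ n)⁻¹ = pascalD n * ((pascalL n)ᵀ * pascalL n) * pascalD n :=
    Matrix.inv_eq_right_inv hQmul
  refine ⟨hQinv, pascalL n * pascalD n, ?_, ?_⟩
  · have hS2 : (pascalL n * pascalD n) * (pascalL n * pascalD n) = 1 := by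
      calc (pascalL n * pascalD n) * (pascalL n * pascalD n)
          = (pascalL n * (pascalD n * pascalL n)) * pascalD n := by
            simp only [Matrix.mul_assoc]
        _ = pascalD n * pascalD n := by rw [hPDP']
        _ = 1 := hD
    exact IsUnit.of_mul_eq_one _ (by rw [← Matrix.det_mul, hS2, Matrix.det_one])
  · have hS2 : (pascalL n * pascalD n) * (pascalL n * pascalD n) = 1 := by
      calc (pascalL n * pascalD n) * (pascalL n * pascalD n)
          = (pascalL n * (pascalD n * pascalL n)) * pascalD n := by
            simp only [Matrix.mul_assoc]
        _ = pascalD n * pascalD n := by rw [hPDP']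
        _ = 1 := hD
    rw [Matrix.inv_eq_right_inv hS2, hQinv]
    calc pascalD n * ((pascalL n)ᵀ * pascalL n) * pascalD n
        = (pascalD n * (pascalL n)ᵀ) * (pascalL n * pascalD n) := by
          simp only [Matrix.mul_assoc]
      _ = (pascalL n * (pascalD n * pascalL n)) * ((pascalL n)ᵀ * (pascalL n * pascalD n)) := by
          rw [hPDP']; simp only [Matrix.mul_assoc]
      _ = pascalL n * pascalD n * pascalQ n * (pascalL n * pascalD n) := by
          simp only [pascalQ, Matrix.mul_assoc]
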